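/- The trace norm of the difference of the average states satisfies ‖ρ̄_sep − ρ̄_ent‖₁ = 1 − 1/d. -/

import Mathlib

open Kronecker
open scoped Matrix ComplexOrder

/-- The swap operator on two copies of a `d`-dimensional space. -/
noncomputable def swapOp (d : ℕ) : Matrix (Fin d × Fin d) (Fin d × Fin d) ℂ :=
  fun p q => if p.1 = q.2 ∧ p.2 = q.1 then 1 else 0

/-- Projector onto the symmetric subspace of `H ⊗ H`. -/
noncomputable def Pplus (d : ℕ) : Matrix (Fin d × Fin d) (Fin d × Fin d) ℂ :=
  ((1 : ℂ)/2) • (1 + swapOp d)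

/-- Projector onto the antisymmetric subspace of `H ⊗ H`. -/
noncomputable def Pminus (d : ℕ) : Matrix (Fin d × Fin d) (Fin d × Fin d) ℂ :=
  ((1 : ℂ)/2) • (1 - swapOp d)

/-- The average two-copy separable state `ρ̄_sep = (P₊ ⊗ P₊)/d₊²`, `d₊ = d(d+1)/2`,
with system ordering `A₁ A₂ B₁ B₂`. -/
noncomputable def rhoSep (d : ℕ) :
    Matrix ((Fin d × Fin d) × (Fin d × Fin d)) ((Fin d × Fin d) × (Fin d × Fin d)) ℂ :=
  (((d : ℂ) * (d + 1) / 2) ^ 2)⁻¹ • (Pplus d ⊗ₖ Pplus d)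

/-- The average two-copy maximally entangled state
`ρ̄_ent = (1/d²)(P₊⊗P₊/d₊ + P₋⊗P₋/d₋)`, `d₊ = d(d±1)/2`. -/
noncomputable def rhoEnt (d : ℕ) :
    Matrix ((Fin d × Fin d) × (Fin d × Fin d)) ((Fin d × Fin d) × (Fin d × Fin d)) ℂ :=
  ((d : ℂ) ^ 2)⁻¹ •
    (((d : ℂ) * (d + 1) / 2)⁻¹ • (Pplus d ⊗ₖ Pplus d) +
     ((d : ℂ) * (d - 1) / 2)⁻¹ • (Pminus d ⊗ₖ Pminus d))

/-- The trace (nuclear) norm of a complex matrix: `‖A‖₁ = Tr √(Aᴴ A)`. -/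
noncomputable def traceNorm {n : Type*} [Fintype n] [DecidableEq n]
    (A : Matrix n n ℂ) : ℝ :=
  (((Matrix.posSemidef_conjTranspose_mul_self A).1.eigenvectorUnitary.1 *
      Matrix.diagonal (((↑) : ℝ → ℂ) ∘ Real.sqrt ∘ (Matrix.posSemidef_conjTranspose_mul_self A).1.eigenvalues) *
      (star (Matrix.posSemidef_conjTranspose_mul_self A).1.eigenvectorUnitary : Matrix n n ℂ)).trace).re

lemma swap_conjT (d : ℕ) : (swapOp d)ᴴ = swapOp d := by
  ext p q
  simp only [Matrix.conjTranspose_apply, swapOp]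
  by_cases h : p.1 = q.2 ∧ p.2 = q.1
  · obtain ⟨h1, h2⟩ := h; simp [h1, h2]
  · have h' : ¬(q.1 = p.2 ∧ q.2 = p.1) := fun ⟨a, b⟩ => h ⟨b.symm, a.symm⟩
    simp [h, h']

lemma swap_mul_swap (d : ℕ) : swapOp d * swapOp d = 1 := by
  ext p q
  simp only [Matrix.mul_apply, swapOp, Matrix.one_apply]
  rw [Finset.sum_eq_single (p.2, p.1)]
  · simp [Prod.ext_iff, eq_comm, and_comm]
  · intro r _ hr
    have : ¬(p.1 = r.2 ∧ p.2 = r.1) := by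
      rintro ⟨h1, h2⟩; exact hr (Prod.ext h2.symm h1.symm)
    simp [this]
  · simp

lemma trace_swap (d : ℕ) : (swapOp d).trace = (d : ℂ) := by
  have key : ∀ p : Fin d × Fin d, (if p.1 = p.2 ∧ p.2 = p.1 then (1:ℂ) else 0)
      = if p.1 = p.2 then 1 else 0 := by
    intro p; by_cases h : p.1 = p.2 <;> simp [h]
  simp only [Matrix.trace, Matrix.diag_apply, swapOp, key]
  rw [Fintype.sum_prod_type]
  simp

lemma Pplus_conjT (d : ℕ) : (Pplus d)ᴴ = Pplus d := by
  simp [Pplus, Matrix.conjTranspose_smul, Matrix.conjTranspose_add, swap_conjT]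

lemma Pminus_conjT (d : ℕ) : (Pminus d)ᴴ = Pminus d := by
  simp [Pminus, Matrix.conjTranspose_smul, Matrix.conjTranspose_sub, swap_conjT]

lemma Pplus_mul_Pplus (d : ℕ) : Pplus d * Pplus d = Pplus d := by
  simp only [Pplus, Matrix.smul_mul, Matrix.mul_smul, add_mul, mul_add, one_mul, mul_one,
    swap_mul_swap, smul_smul]
  module

lemma Pminus_mul_Pminus (d : ℕ) : Pminus d * Pminus d = Pminus d := by
  simp only [Pminus, Matrix.smul_mul, Matrix.mul_smul, sub_mul, mul_sub, one_mul, mul_one,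
    swap_mul_swap, smul_smul]
  module

lemma Pplus_mul_Pminus (d : ℕ) : Pplus d * Pminus d = 0 := by
  simp only [Pplus, Pminus, Matrix.smul_mul, Matrix.mul_smul, add_mul, mul_sub, one_mul, mul_one,
    swap_mul_swap, smul_smul]
  module

lemma Pminus_mul_Pplus (d : ℕ) : Pminus d * Pplus d = 0 := by
  simp only [Pplus, Pminus, Matrix.smul_mul, Matrix.mul_smul, sub_mul, mul_add, one_mul, mul_one,
    swap_mul_swap, smul_smul]
  module

lemma trace_Pplus (d : ℕ) : (Pplus d).trace = (d : ℂ) * (d + 1) / 2 := by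
  simp [Pplus, Matrix.trace_smul, Matrix.trace_add, Matrix.trace_one, trace_swap]
  ring

lemma trace_Pminus (d : ℕ) : (Pminus d).trace = (d : ℂ) * (d - 1) / 2 := by
  simp [Pminus, Matrix.trace_smul, Matrix.trace_sub, Matrix.trace_one, trace_swap]
  ring

lemma kron_conjT {n m : Type*} [Fintype n] [Fintype m] [DecidableEq n] [DecidableEq m]
    (A : Matrix n n ℂ) (B : Matrix m m ℂ) : (A ⊗ₖ B)ᴴ = Aᴴ ⊗ₖ Bᴴ := by
  ext p q
  simp [Matrix.conjTranspose_apply, Matrix.kroneckerMap_apply, mul_comm]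

lemma traceNorm_helper {n : Type*} [Fintype n] [DecidableEq n] (Q R : Matrix n n ℂ)
    (hQH : Qᴴ = Q) (hRH : Rᴴ = R) (hQQ : Q * Q = Q) (hRR : R * R = R)
    (hQR : Q * R = 0) (hRQ : R * Q = 0) (a b : ℝ) (ha : 0 ≤ a) (hb : 0 ≤ b) :
    traceNorm ((a : ℂ) • Q - (b : ℂ) • R) = (((a : ℂ) * Q.trace + (b : ℂ) * R.trace)).re := by
  set M := (a : ℂ) • Q - (b : ℂ) • R with hM
  have hMM : Mᴴ * M = ((a : ℂ) * a) • Q + ((b : ℂ) * b) • R := by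
    simp only [hM, Matrix.conjTranspose_sub, Matrix.conjTranspose_smul, hQH, hRH,
      Matrix.sub_mul, Matrix.mul_sub, Matrix.smul_mul, Matrix.mul_smul, hQQ, hRR, hQR, hRQ,
      smul_smul, smul_zero, Complex.star_def, Complex.conj_ofReal, sub_zero, zero_sub,
      sub_neg_eq_add]
    rw [smul_neg, sub_neg_eq_add, smul_smul]
  have hNsq : ((a : ℂ) • Q + (b : ℂ) • R) ^ 2 = Mᴴ * M := by
    rw [sq, hMM]
    simp only [Matrix.add_mul, Matrix.mul_add, Matrix.smul_mul, Matrix.mul_smul, hQQ, hRR,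
      hQR, hRQ, smul_smul, smul_zero, add_zero, zero_add]
  have hNpsd : ((a : ℂ) • Q + (b : ℂ) • R).PosSemidef := by
    have key : (a : ℂ) • Q + (b : ℂ) • R =
        ((Real.sqrt a : ℂ) • Q + (Real.sqrt b : ℂ) • R)ᴴ *
        ((Real.sqrt a : ℂ) • Q + (Real.sqrt b : ℂ) • R) := by
      simp only [Matrix.conjTranspose_add, Matrix.conjTranspose_smul, hQH, hRH,
        Matrix.add_mul, Matrix.mul_add, Matrix.smul_mul, Matrix.mul_smul, hQQ, hRR, hQR, hRQ,
        smul_smul, smul_zero, add_zero, zero_add, Complex.star_def, Complex.conj_ofReal]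
      congr 2 <;> norm_cast <;> rw [Real.mul_self_sqrt] <;> assumption
    rw [key]
    exact Matrix.posSemidef_conjTranspose_mul_self _
  have hsqrt : (a : ℂ) • Q + (b : ℂ) • R =
      (Matrix.posSemidef_conjTranspose_mul_self M).1.eigenvectorUnitary.1 *
      Matrix.diagonal (((↑) : ℝ → ℂ) ∘ Real.sqrt ∘ (Matrix.posSemidef_conjTranspose_mul_self M).1.eigenvalues) *
      (star (Matrix.posSemidef_conjTranspose_mul_self M).1.eigenvectorUnitary : Matrix n n ℂ) := by
    open scoped MatrixOrder in
    have h1 : CFC.sqrt (Mᴴ * M) = (a : ℂ) • Q + (b : ℂ) • R := by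
      rw [← hNsq]; exact CFC.sqrt_sq _ hNpsd.nonneg
    open scoped MatrixOrder in
    rw [← h1, CFC.sqrt_eq_real_sqrt _ (Matrix.posSemidef_conjTranspose_mul_self M).nonneg,
      cfcₙ_eq_cfc, (Matrix.posSemidef_conjTranspose_mul_self M).1.cfc_eq, Matrix.IsHermitian.cfc]
    simp [Unitary.conjStarAlgAut_apply]
  rw [traceNorm, ← hsqrt]
  simp [Matrix.trace_add, Matrix.trace_smul, smul_eq_mul]

/-- Trace norm of the difference of the average states: `‖ρ̄_sep − ρ̄_ent‖₁ = 1 − 1/d`. -/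
theorem traceNorm_rhoSep_sub_rhoEnt (d : ℕ) (hd : 2 ≤ d) :
    traceNorm (rhoSep d - rhoEnt d) = 1 - 1 / (d : ℝ) := by
  have hdr : (2 : ℝ) ≤ (d : ℝ) := by exact_mod_cast hd
  have hdr0 : (d : ℝ) ≠ 0 := by linarith
  have hcp0 : (d : ℝ) * ((d : ℝ) + 1) / 2 ≠ 0 := by positivity
  have hcm0 : (d : ℝ) * ((d : ℝ) - 1) / 2 ≠ 0 := by
    have : (0:ℝ) < (d : ℝ) * ((d : ℝ) - 1) / 2 := by nlinarith
    linarith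
  have hdc0 : (d : ℂ) ≠ 0 := by exact_mod_cast hdr0
  have hdm1c : (d : ℂ) - 1 ≠ 0 := by
    have h : (((d : ℝ) - 1 : ℝ) : ℂ) ≠ 0 := Complex.ofReal_ne_zero.2 (by linarith)
    push_cast at h; exact h
  have hdp1c : (d : ℂ) + 1 ≠ 0 := by
    have h : (((d : ℝ) + 1 : ℝ) : ℂ) ≠ 0 := Complex.ofReal_ne_zero.2 (by linarith)
    push_cast at h; exact h
  have hcpc0 : (d : ℂ) * ((d : ℂ) + 1) / 2 ≠ 0 := by
    have := hcp0; intro h; apply this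
    have : ((((d:ℝ) * ((d:ℝ) + 1) / 2 : ℝ)) : ℂ) = 0 := by push_cast; push_cast at h; exact h
    exact_mod_cast this
  have hcmc0 : (d : ℂ) * ((d : ℂ) - 1) / 2 ≠ 0 := by
    have := hcm0; intro h; apply this
    have : ((((d:ℝ) * ((d:ℝ) - 1) / 2 : ℝ)) : ℂ) = 0 := by push_cast; push_cast at h; exact h
    exact_mod_cast this
  -- the two orthogonal projectors
  have hQH : (Pplus d ⊗ₖ Pplus d)ᴴ = Pplus d ⊗ₖ Pplus d := by
    rw [kron_conjT, Pplus_conjT]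
  have hRH : (Pminus d ⊗ₖ Pminus d)ᴴ = Pminus d ⊗ₖ Pminus d := by
    rw [kron_conjT, Pminus_conjT]
  have hQQ : (Pplus d ⊗ₖ Pplus d) * (Pplus d ⊗ₖ Pplus d) = Pplus d ⊗ₖ Pplus d := by
    rw [← Matrix.mul_kronecker_mul, Pplus_mul_Pplus]
  have hRR : (Pminus d ⊗ₖ Pminus d) * (Pminus d ⊗ₖ Pminus d) = Pminus d ⊗ₖ Pminus d := by
    rw [← Matrix.mul_kronecker_mul, Pminus_mul_Pminus]
  have hQR : (Pplus d ⊗ₖ Pplus d) * (Pminus d ⊗ₖ Pminus d) = 0 := by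
    rw [← Matrix.mul_kronecker_mul, Pplus_mul_Pminus, Matrix.zero_kronecker]
  have hRQ : (Pminus d ⊗ₖ Pminus d) * (Pplus d ⊗ₖ Pplus d) = 0 := by
    rw [← Matrix.mul_kronecker_mul, Pminus_mul_Pplus, Matrix.zero_kronecker]
  have hQtr : (Pplus d ⊗ₖ Pplus d).trace = ((d : ℂ) * (d + 1) / 2) ^ 2 := by
    rw [Matrix.trace_kronecker, trace_Pplus]; ring
  have hRtr : (Pminus d ⊗ₖ Pminus d).trace = ((d : ℂ) * (d - 1) / 2) ^ 2 := by
    rw [Matrix.trace_kronecker, trace_Pminus]; ring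
  -- the coefficients
  set a : ℝ := ((d : ℝ) * (d - 1) / 2) / ((d : ℝ) ^ 2 * ((d : ℝ) * (d + 1) / 2) ^ 2) with ha_def
  set b : ℝ := 1 / ((d : ℝ) ^ 2 * ((d : ℝ) * (d - 1) / 2)) with hb_def
  have ha : 0 ≤ a := by
    rw [ha_def]; apply div_nonneg <;> nlinarith
  have hb : 0 ≤ b := by
    rw [hb_def]; apply div_nonneg
    · norm_num
    · have h1 : (0:ℝ) < (d : ℝ) ^ 2 := by positivity
      have h2 : (0:ℝ) < (d : ℝ) * ((d : ℝ) - 1) / 2 := by nlinarith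
      nlinarith
  have hdiff : rhoSep d - rhoEnt d =
      (a : ℂ) • (Pplus d ⊗ₖ Pplus d) - (b : ℂ) • (Pminus d ⊗ₖ Pminus d) := by
    rw [rhoSep, rhoEnt, ha_def, hb_def]
    match_scalars <;> push_cast <;> field_simp <;> ring
  rw [hdiff, traceNorm_helper _ _ hQH hRH hQQ hRR hQR hRQ a b ha hb, hQtr, hRtr]
  have : (a : ℂ) * ((d : ℂ) * (d + 1) / 2) ^ 2 + (b : ℂ) * ((d : ℂ) * (d - 1) / 2) ^ 2
      = (((1 : ℝ) - 1 / (d : ℝ) : ℝ) : ℂ) := by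
    rw [ha_def, hb_def]
    push_cast
    field_simp
    ring
  rw [this, Complex.ofReal_re]
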